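/- Let Δ_n be random variables with E[Δ_n] = s_n - s_{n-1} (with s_{-1} = 0), where s_n → μ, and let N be an independent random nonnegative integer with P(N = n) = p_n > 0 for all n. If ∑_n E[Δ_n²]/p_n < ∞, then the estimator W = Δ_N / p_N satisfies E[W] = μ and E[W²] = ∑_n E[Δ_n²]/p_n < ∞. -/

import Mathlib

open MeasureTheory ProbabilityTheory Filter Real Topology

/-- Single-term randomized MLMC estimator: let `Δ n` be square-integrable with partial sums
of means `s n = ∑_{k=0}^n E[Δ k]` converging to `μ`, and let `N` be an independent random
nonnegative integer with `P(N = n) = p n > 0` for all `n`. If `∑ n, E[Δ n²]/p n < ∞`, then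
`W = Δ N / p N` satisfies `E[W] = μ` and `E[W²] = ∑ n, E[Δ n²]/p n < ∞`. -/
theorem stmt_18 {Ω : Type*} [MeasurableSpace Ω] (P : Measure Ω) [IsProbabilityMeasure P]
    (Δ : ℕ → Ω → ℝ) (hΔmeas : ∀ n, Measurable (Δ n))
    (hΔL2 : ∀ n, MemLp (Δ n) 2 P)
    (μ : ℝ)
    (hs : Tendsto (fun n : ℕ => ∑ k ∈ Finset.range (n + 1), ∫ ω, Δ k ω ∂P)
      atTop (𝓝 μ))
    (N : Ω → ℕ) (hNmeas : Measurable N)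
    (p : ℕ → ℝ) (hp : ∀ n, 0 < p n)
    (hpmf : ∀ n : ℕ, P {ω | N ω = n} = ENNReal.ofReal (p n))
    (hNindep : IndepFun N (fun ω => fun n => Δ n ω) P)
    (hsum : Summable (fun n : ℕ => (∫ ω, (Δ n ω) ^ 2 ∂P) / p n)) :
    Integrable (fun ω => Δ (N ω) ω / p (N ω)) P ∧
    (∫ ω, Δ (N ω) ω / p (N ω) ∂P) = μ ∧
    (∫ ω, (Δ (N ω) ω / p (N ω)) ^ 2 ∂P) = ∑' n : ℕ, (∫ ω, (Δ n ω) ^ 2 ∂P) / p n := by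
  classical
  set A : ℕ → Set Ω := fun n => N ⁻¹' {n} with hA
  have hAmeas : ∀ n, MeasurableSet (A n) := fun n => hNmeas (measurableSet_singleton n)
  have hAdisj : Pairwise (Function.onFun Disjoint A) := by
    intro m n hmn
    simp only [Function.onFun, Set.disjoint_left, A, Set.mem_preimage,
      Set.mem_singleton_iff]
    intro ω h1 h2
    exact hmn (h1 ▸ h2.symm ▸ rfl)
  have hAunion : (⋃ n, A n) = Set.univ := by
    ext ω; simp [A]
  have hPA : ∀ n, P (A n) = ENNReal.ofReal (p n) := fun n => hpmf n
  -- key independence lemma, lintegral version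
  have key_lin : ∀ (n : ℕ) (g : (ℕ → ℝ) → ENNReal), Measurable g →
      ∫⁻ ω in A n, g (fun k => Δ k ω) ∂P
        = ENNReal.ofReal (p n) * ∫⁻ ω, g (fun k => Δ k ω) ∂P := by
    intro n g hg
    have hind : IndepFun (fun ω => Set.indicator ({n} : Set ℕ) (fun _ => (1 : ENNReal)) (N ω))
        (fun ω => g (fun k => Δ k ω)) P := by
      exact hNindep.comp (measurable_const.indicator (measurableSet_singleton n)) hg
    have hgm : Measurable (fun ω => g (fun k => Δ k ω)) :=
      hg.comp (measurable_pi_lambda _ (fun k => hΔmeas k))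
    have hindm : Measurable (fun ω => Set.indicator ({n} : Set ℕ)
        (fun _ => (1 : ENNReal)) (N ω)) :=
      (measurable_const.indicator (measurableSet_singleton n)).comp hNmeas
    have hmul := lintegral_mul_eq_lintegral_mul_lintegral_of_indepFun''
      hindm.aemeasurable hgm.aemeasurable hind
    have e1 : ∀ ω, Set.indicator ({n} : Set ℕ) (fun _ => (1 : ENNReal)) (N ω)
        * g (fun k => Δ k ω) = (A n).indicator (fun ω => g (fun k => Δ k ω)) ω := by
      intro ω
      by_cases h : ω ∈ A n
      · have : N ω ∈ ({n} : Set ℕ) := h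
        simp [Set.indicator_of_mem, h, this]
      · have : N ω ∉ ({n} : Set ℕ) := h
        simp [Set.indicator_of_notMem, h, this]
    have e1b : ∀ ω, Set.indicator ({n} : Set ℕ) (fun _ => (1 : ENNReal)) (N ω)
        = (A n).indicator (fun _ => 1) ω := by
      intro ω
      by_cases h : ω ∈ A n
      · have : N ω ∈ ({n} : Set ℕ) := h
        simp [Set.indicator_of_mem, h, this]
      · have : N ω ∉ ({n} : Set ℕ) := h
        simp [Set.indicator_of_notMem, h, this]
    have e2 : ∫⁻ ω, Set.indicator ({n} : Set ℕ) (fun _ => (1 : ENNReal)) (N ω) ∂P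
        = ENNReal.ofReal (p n) := by
      simp_rw [e1b]
      calc ∫⁻ ω, (A n).indicator (fun _ => (1 : ENNReal)) ω ∂P
          = P (A n) := lintegral_indicator_one (hAmeas n)
        _ = ENNReal.ofReal (p n) := hPA n
    calc ∫⁻ ω in A n, g (fun k => Δ k ω) ∂P
        = ∫⁻ ω, (A n).indicator (fun ω => g (fun k => Δ k ω)) ω ∂P :=
          (lintegral_indicator (hAmeas n) _).symm
      _ = ∫⁻ ω, Set.indicator ({n} : Set ℕ) (fun _ => (1 : ENNReal)) (N ω)
            * g (fun k => Δ k ω) ∂P := by simp_rw [e1]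
      _ = ENNReal.ofReal (p n) * ∫⁻ ω, g (fun k => Δ k ω) ∂P := by rw [hmul, e2]
  -- key independence lemma, Bochner version
  have key_int : ∀ (n : ℕ) (g : (ℕ → ℝ) → ℝ), Measurable g →
      ∫ ω in A n, g (fun k => Δ k ω) ∂P
        = p n * ∫ ω, g (fun k => Δ k ω) ∂P := by
    intro n g hg
    have hind : IndepFun (fun ω => Set.indicator ({n} : Set ℕ) (fun _ => (1 : ℝ)) (N ω))
        (fun ω => g (fun k => Δ k ω)) P :=
      hNindep.comp (measurable_const.indicator (measurableSet_singleton n)) hg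
    have hgm : Measurable (fun ω => g (fun k => Δ k ω)) :=
      hg.comp (measurable_pi_lambda _ (fun k => hΔmeas k))
    have hindm : Measurable (fun ω => Set.indicator ({n} : Set ℕ)
        (fun _ => (1 : ℝ)) (N ω)) :=
      (measurable_const.indicator (measurableSet_singleton n)).comp hNmeas
    have hmul := hind.integral_mul_eq_mul_integral hindm.aestronglyMeasurable hgm.aestronglyMeasurable
    simp only [Pi.mul_apply] at hmul
    have e1 : ∀ ω, Set.indicator ({n} : Set ℕ) (fun _ => (1 : ℝ)) (N ω)
        * g (fun k => Δ k ω) = (A n).indicator (fun ω => g (fun k => Δ k ω)) ω := by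
      intro ω
      by_cases h : ω ∈ A n
      · have : N ω ∈ ({n} : Set ℕ) := h
        simp [Set.indicator_of_mem, h, this]
      · have : N ω ∉ ({n} : Set ℕ) := h
        simp [Set.indicator_of_notMem, h, this]
    have e1b : ∀ ω, Set.indicator ({n} : Set ℕ) (fun _ => (1 : ℝ)) (N ω)
        = (A n).indicator (fun _ => 1) ω := by
      intro ω
      by_cases h : ω ∈ A n
      · have : N ω ∈ ({n} : Set ℕ) := h
        simp [Set.indicator_of_mem, h, this]
      · have : N ω ∉ ({n} : Set ℕ) := h
        simp [Set.indicator_of_notMem, h, this]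
    have e2 : ∫ ω, Set.indicator ({n} : Set ℕ) (fun _ => (1 : ℝ)) (N ω) ∂P = p n := by
      simp_rw [e1b]
      calc ∫ ω, (A n).indicator (fun _ => (1 : ℝ)) ω ∂P
          = (P (A n)).toReal := integral_indicator_one (hAmeas n)
        _ = p n := by rw [hPA n, ENNReal.toReal_ofReal (hp n).le]
    calc ∫ ω in A n, g (fun k => Δ k ω) ∂P
        = ∫ ω, (A n).indicator (fun ω => g (fun k => Δ k ω)) ω ∂P :=
          (integral_indicator (hAmeas n)).symm
      _ = ∫ ω, Set.indicator ({n} : Set ℕ) (fun _ => (1 : ℝ)) (N ω)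
            * g (fun k => Δ k ω) ∂P := by simp_rw [e1]
      _ = p n * ∫ ω, g (fun k => Δ k ω) ∂P := by rw [hmul, e2]
  -- measurability of W
  have hWmeas : Measurable (fun ω => Δ (N ω) ω / p (N ω)) := by
    have h1 : Measurable (fun q : Ω × ℕ => Δ q.2 q.1) :=
      measurable_from_prod_countable_left (fun n => hΔmeas n)
    have h2 : Measurable (fun ω => Δ (N ω) ω) :=
      h1.comp (measurable_id.prodMk hNmeas)
    have h3 : Measurable (fun ω => p (N ω)) := measurable_from_top.comp hNmeas
    exact h2.div h3
  -- basic facts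
  have hEsq_nn : ∀ n, 0 ≤ ∫ ω, (Δ n ω) ^ 2 ∂P :=
    fun n => integral_nonneg fun ω => sq_nonneg _
  have hSnn : ∀ n, 0 ≤ (∫ ω, (Δ n ω) ^ 2 ∂P) / p n :=
    fun n => div_nonneg (hEsq_nn n) (hp n).le
  have hsqint : ∀ n, Integrable (fun ω => (Δ n ω) ^ 2) P := fun n =>
    (memLp_two_iff_integrable_sq (hΔL2 n).aestronglyMeasurable).1 (hΔL2 n)
  -- second moment, term by term
  have hterm : ∀ n, ∫⁻ ω in A n, ENNReal.ofReal ((Δ (N ω) ω / p (N ω)) ^ 2) ∂P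
      = ENNReal.ofReal ((∫ ω, (Δ n ω) ^ 2 ∂P) / p n) := by
    intro n
    have e1 : ∫⁻ ω in A n, ENNReal.ofReal ((Δ (N ω) ω / p (N ω)) ^ 2) ∂P
        = ∫⁻ ω in A n, ENNReal.ofReal ((p n)⁻¹ ^ 2) * ENNReal.ofReal ((Δ n ω) ^ 2) ∂P := by
      refine setLIntegral_congr_fun (hAmeas n) (fun ω hω => ?_)
      have hω' : N ω = n := hω
      rw [hω', ← ENNReal.ofReal_mul (by positivity)]
      congr 1
      field_simp
    rw [e1, lintegral_const_mul _ (((hΔmeas n).pow_const 2).ennreal_ofReal)]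
    have hkey := key_lin n (fun v => ENNReal.ofReal ((v n) ^ 2))
      (((measurable_pi_apply n).pow_const 2).ennreal_ofReal)
    simp only at hkey
    rw [hkey, ← ofReal_integral_eq_lintegral_ofReal (hsqint n)
      (Filter.Eventually.of_forall fun ω => sq_nonneg _)]
    rw [← ENNReal.ofReal_mul (hp n).le, ← ENNReal.ofReal_mul (by positivity)]
    congr 1
    field_simp [(hp n).ne']
  set S := ∑' n : ℕ, (∫ ω, (Δ n ω) ^ 2 ∂P) / p n with hS
  have hT : ∫⁻ ω, ENNReal.ofReal ((Δ (N ω) ω / p (N ω)) ^ 2) ∂P = ENNReal.ofReal S := by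
    rw [← setLIntegral_univ, ← hAunion, lintegral_iUnion hAmeas hAdisj]
    simp_rw [hterm]
    rw [← ENNReal.ofReal_tsum_of_nonneg hSnn hsum]
  have hW2int : Integrable (fun ω => (Δ (N ω) ω / p (N ω)) ^ 2) P := by
    refine ⟨(hWmeas.pow_const 2).aestronglyMeasurable, ?_⟩
    rw [hasFiniteIntegral_iff_ofReal (Filter.Eventually.of_forall fun ω => sq_nonneg _), hT]
    exact ENNReal.ofReal_lt_top
  have hWL2 : MemLp (fun ω => Δ (N ω) ω / p (N ω)) 2 P :=
    (memLp_two_iff_integrable_sq hWmeas.aestronglyMeasurable).2 hW2int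
  have hWint : Integrable (fun ω => Δ (N ω) ω / p (N ω)) P := hWL2.integrable one_le_two
  have hint2 : ∫ ω, (Δ (N ω) ω / p (N ω)) ^ 2 ∂P = S := by
    rw [integral_eq_lintegral_of_nonneg_ae (Filter.Eventually.of_forall fun ω => sq_nonneg _)
      (hWmeas.pow_const 2).aestronglyMeasurable, hT, ENNReal.toReal_ofReal (tsum_nonneg hSnn)]
  -- first moment
  have hsetint : ∀ n, ∫ ω in A n, Δ (N ω) ω / p (N ω) ∂P = ∫ ω, Δ n ω ∂P := by
    intro n
    have e1 : ∫ ω in A n, Δ (N ω) ω / p (N ω) ∂P = ∫ ω in A n, (p n)⁻¹ * Δ n ω ∂P := by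
      refine setIntegral_congr_fun (hAmeas n) (fun ω hω => ?_)
      have hω' : N ω = n := hω
      rw [hω']
      ring
    rw [e1, integral_const_mul]
    have hkey := key_int n (fun v => v n) (measurable_pi_apply n)
    simp only at hkey
    rw [hkey]
    rw [inv_mul_cancel_left₀ (hp n).ne']
  -- summability of means
  have hpsum : Summable p := by
    have h2 : ∑' n, P (A n) = 1 := by
      rw [← measure_iUnion hAdisj hAmeas, hAunion]
      simp
    have h3 := ENNReal.summable_toReal (by rw [h2]; exact ENNReal.one_ne_top)
    have h4 : ∀ n, (P (A n)).toReal = p n := fun n => by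
      rw [hPA n, ENNReal.toReal_ofReal (hp n).le]
    simpa [h4] using h3
  have habs : ∀ n, |∫ ω, Δ n ω ∂P|
      ≤ (p n + (∫ ω, (Δ n ω) ^ 2 ∂P) / p n) / 2 := by
    intro n
    have h1 : |∫ ω, Δ n ω ∂P| ≤ ∫ ω, |Δ n ω| ∂P := by
      simpa using norm_integral_le_integral_norm (μ := P) (f := Δ n)
    have habsL2 : MemLp (fun ω => |Δ n ω|) 2 P := by
      simpa using (hΔL2 n).norm
    have h2 : (∫ ω, |Δ n ω| ∂P) ^ 2 ≤ ∫ ω, |Δ n ω| ^ 2 ∂P := by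
      have hv := variance_nonneg (fun ω => |Δ n ω|) P
      rw [variance_eq_sub habsL2] at hv
      simpa using hv
    have h2' : ∫ ω, |Δ n ω| ^ 2 ∂P = ∫ ω, (Δ n ω) ^ 2 ∂P := by
      simp [sq_abs]
    have h3 : (∫ ω, |Δ n ω| ∂P) ^ 2 ≤ p n * ((∫ ω, (Δ n ω) ^ 2 ∂P) / p n) := by
      rw [mul_div_cancel₀ _ (hp n).ne']
      rw [h2'] at h2
      exact h2
    have h4 : 0 ≤ ∫ ω, |Δ n ω| ∂P := integral_nonneg fun ω => abs_nonneg _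
    have h5 : |∫ ω, Δ n ω ∂P| ^ 2 ≤ p n * ((∫ ω, (Δ n ω) ^ 2 ∂P) / p n) := by
      nlinarith [h1, h3, abs_nonneg (∫ ω, Δ n ω ∂P)]
    nlinarith [h5, abs_nonneg (∫ ω, Δ n ω ∂P), (hp n), hSnn n,
      sq_nonneg (p n - (∫ ω, (Δ n ω) ^ 2 ∂P) / p n),
      sq_nonneg (p n + (∫ ω, (Δ n ω) ^ 2 ∂P) / p n)]
  have hasum : Summable (fun n => ∫ ω, Δ n ω ∂P) := by
    apply Summable.of_abs
    refine Summable.of_nonneg_of_le (fun n => abs_nonneg _) habs ?_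
    exact (hpsum.add hsum).div_const 2
  have htsum : ∑' n, ∫ ω, Δ n ω ∂P = μ := by
    have h1 : Tendsto (fun n : ℕ => ∑ k ∈ Finset.range n, ∫ ω, Δ k ω ∂P)
        atTop (𝓝 (∑' n, ∫ ω, Δ n ω ∂P)) := hasum.hasSum.tendsto_sum_nat
    have h2 : Tendsto (fun n : ℕ => ∑ k ∈ Finset.range (n + 1), ∫ ω, Δ k ω ∂P)
        atTop (𝓝 (∑' n, ∫ ω, Δ n ω ∂P)) := h1.comp (tendsto_add_atTop_nat 1)
    exact tendsto_nhds_unique h2 hs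
  have hμint : ∫ ω, Δ (N ω) ω / p (N ω) ∂P = μ := by
    rw [← setIntegral_univ, ← hAunion, integral_iUnion hAmeas hAdisj
      (hAunion ▸ hWint.integrableOn)]
    simp_rw [hsetint]
    exact htsum
  exact ⟨hWint, hμint, hint2⟩
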